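/- Let Γ = 1.1, P ∈ (0, 1/3], α = N-2 and β = √((N-2)(10-N))/2 for 3 ≤ N ≤ 9, and ψ(z) = φ((1-P)z) - e^{-απ/(2β)}·φ((1+P)e^{-2π/β}·z) with φ(x) = -2(N-2)(e^x - 1 - x). Then ψ''(z) < 0 for all z ∈ [0, Γ], and since ψ(0) = ψ'(0) = 0, ψ(z) < 0 for all z ∈ (0, Γ]. -/

import Mathlib

open Real

set_option maxHeartbeats 1000000 in
theorem psi_neg (N : ℕ) (hN3 : 3 ≤ N) (hN9 : N ≤ 9)
    (α β : ℝ) (hα : α = (N : ℝ) - 2)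
    (hβ : β = Real.sqrt (((N : ℝ) - 2) * (10 - (N : ℝ))) / 2)
    (P : ℝ) (hP0 : 0 < P) (hP3 : P ≤ 1 / 3)
    (φ ψ : ℝ → ℝ)
    (hφ : ∀ x : ℝ, φ x = -2 * ((N : ℝ) - 2) * (exp x - 1 - x))
    (hψ : ∀ z : ℝ, ψ z = φ ((1 - P) * z) - exp (-α * π / (2 * β)) * φ ((1 + P) * exp (-2 * π / β) * z)) :
    (∀ z ∈ Set.Icc (0 : ℝ) 1.1, deriv (deriv ψ) z < 0) ∧
    (∀ z ∈ Set.Ioc (0 : ℝ) 1.1, ψ z < 0) := by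
  have hN3' : (3:ℝ) ≤ (N:ℝ) := by exact_mod_cast hN3
  have hN9' : (N:ℝ) ≤ 9 := by exact_mod_cast hN9
  have hα1 : (1:ℝ) ≤ α := by rw [hα]; linarith
  have hαpos : (0:ℝ) < α := by linarith
  -- bounds on β
  have hprod1 : (1:ℝ) ≤ ((N:ℝ) - 2) * (10 - (N:ℝ)) := by nlinarith
  have hprod16 : ((N:ℝ) - 2) * (10 - (N:ℝ)) ≤ 16 := by nlinarith [sq_nonneg ((N:ℝ) - 6)]
  have hβpos : (0:ℝ) < β := by
    rw [hβ]
    have : (0:ℝ) < Real.sqrt (((N:ℝ) - 2) * (10 - (N:ℝ))) :=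
      Real.sqrt_pos.2 (by linarith)
    linarith
  have hβ2 : β ≤ 2 := by
    rw [hβ]
    have : Real.sqrt (((N:ℝ) - 2) * (10 - (N:ℝ))) ≤ 4 := by
      have : Real.sqrt (((N:ℝ) - 2) * (10 - (N:ℝ))) ≤ Real.sqrt 16 :=
        Real.sqrt_le_sqrt hprod16
      simpa [show Real.sqrt 16 = 4 by
        rw [show (16:ℝ) = 4^2 by norm_num, Real.sqrt_sq (by norm_num)]] using this
    linarith
  set a : ℝ := 1 - P with ha_def
  set c : ℝ := exp (-α * π / (2 * β)) with hc_def
  set d : ℝ := (1 + P) * exp (-2 * π / β) with hd_def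
  clear_value a c d
  have hπ3 : (3:ℝ) < π := by
    have := Real.pi_gt_d6
    linarith
  have ha23 : (2:ℝ)/3 ≤ a := by simp only [ha_def]; linarith
  have hapos : 0 < a := by linarith
  have hc1 : c ≤ 1 := by
    rw [hc_def]
    have hnum : -α * π / (2 * β) ≤ 0 := by
      apply div_nonpos_of_nonpos_of_nonneg (by nlinarith) (by linarith)
    calc exp (-α * π / (2 * β)) ≤ exp 0 := Real.exp_le_exp.2 hnum
    _ = 1 := Real.exp_zero
  have hcpos : 0 < c := by rw [hc_def]; exact Real.exp_pos _
  have hdpos : 0 < d := by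
    rw [hd_def]
    positivity
  have hexppi : exp (-2 * π / β) ≤ exp (-π) := by
    apply Real.exp_le_exp.2
    rw [div_le_iff₀ hβpos]
    nlinarith
  have hexppihalf : exp (-π) < 1/2 := by
    rw [Real.exp_neg]
    rw [inv_lt_comm₀ (Real.exp_pos _) (by norm_num)]
    have := Real.add_one_lt_exp (x := π) (by positivity)
    have h2 : ((1:ℝ)/2)⁻¹ = 2 := by norm_num
    rw [h2]; linarith
  have hdlt : d < a := by
    have h1 : d ≤ (4/3) * exp (-2 * π / β) := by
      rw [hd_def]
      have := Real.exp_pos (-2 * π / β)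
      nlinarith
    have h2 : (4/3 : ℝ) * exp (-2 * π / β) ≤ (4/3) * exp (-π) := by nlinarith
    nlinarith
  have hcd2 : c * d^2 < a^2 := by
    have hd2 : d^2 < a^2 := by
      have := mul_self_lt_mul_self hdpos.le hdlt
      simpa [pow_two] using this
    calc c * d^2 ≤ 1 * d^2 := mul_le_mul_of_nonneg_right hc1 (sq_nonneg d)
    _ = d^2 := one_mul _
    _ < a^2 := hd2
  -- explicit form of ψ
  set F : ℝ → ℝ := fun z => -2*α * (exp (a*z) - 1 - a*z) + (2*α*c) * (exp (d*z) - 1 - d*z) with hF_def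
  set G : ℝ → ℝ := fun z => -2*α * (a * exp (a*z) - a) + (2*α*c) * (d * exp (d*z) - d) with hG_def
  set H : ℝ → ℝ := fun z => -2*α * (a * (a * exp (a*z))) + (2*α*c) * (d * (d * exp (d*z))) with hH_def
  clear_value F G H
  have hψF : ψ = F := by
    funext z
    rw [hψ, hφ, hφ]
    simp only [hF_def]
    rw [hα]
    ring
  have key : ∀ (k : ℝ) (z : ℝ), HasDerivAt (fun z => exp (k*z)) (k * exp (k*z)) z := by
    intro k z
    have h := ((hasDerivAt_id z).const_mul k).exp
    simpa [mul_comm] using h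
  have hbase : ∀ (k : ℝ) (z : ℝ),
      HasDerivAt (fun z => exp (k*z) - 1 - k*z) (k * exp (k*z) - k) z := by
    intro k z
    have h1 := (key k z).sub_const 1
    have h2 := (hasDerivAt_id z).const_mul k
    exact (h1.sub h2).congr_deriv (by ring)
  have hFz : ∀ z, HasDerivAt F (G z) z := by
    intro z
    have h1 := (hbase a z).const_mul (-2*α)
    have h2 := (hbase d z).const_mul (2*α*c)
    rw [hF_def, hG_def]; exact h1.add h2
  have hbase2 : ∀ (k : ℝ) (z : ℝ),
      HasDerivAt (fun z => k * exp (k*z) - k) (k * (k * exp (k*z))) z := by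
    intro k z
    have h1 := ((key k z).const_mul k).sub_const k
    simpa [mul_comm, mul_assoc, mul_left_comm] using h1
  have hGz : ∀ z, HasDerivAt G (H z) z := by
    intro z
    have h1 := (hbase2 a z).const_mul (-2*α)
    have h2 := (hbase2 d z).const_mul (2*α*c)
    rw [hG_def, hH_def]; exact h1.add h2
  have hderivψ : deriv ψ = G := by
    funext z
    rw [hψF]
    exact (hFz z).deriv
  have hderiv2 : ∀ z, deriv (deriv ψ) z = H z := by
    intro z
    rw [hderivψ]
    exact (hGz z).deriv
  -- Part 1: H < 0 on [0, 1.1]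
  have hHneg : ∀ z ∈ Set.Icc (0:ℝ) 1.1, H z < 0 := by
    intro z hz
    obtain ⟨hz0, hz1⟩ := hz
    have hexple : exp (d*z) ≤ exp (a*z) :=
      Real.exp_le_exp.2 (mul_le_mul_of_nonneg_right hdlt.le hz0)
    have hmain : c * (d * (d * exp (d*z))) < a * (a * exp (a*z)) := by
      have he2 : (0:ℝ) < exp (a*z) := Real.exp_pos _
      have h1 : c * (d * (d * exp (d*z))) = (c * d^2) * exp (d*z) := by ring
      have h2 : (c * d^2) * exp (d*z) ≤ (c * d^2) * exp (a*z) :=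
        mul_le_mul_of_nonneg_left hexple (by positivity)
      have h3 : (c * d^2) * exp (a*z) < a^2 * exp (a*z) :=
        mul_lt_mul_of_pos_right hcd2 he2
      have h4 : a * (a * exp (a*z)) = a^2 * exp (a*z) := by ring
      linarith
    simp only [hH_def]
    have h5 : c * (d * (d * exp (d*z))) - a * (a * exp (a*z)) < 0 := by linarith
    calc -2*α * (a * (a * exp (a*z))) + 2*α*c * (d * (d * exp (d*z)))
        = 2*α * (c * (d * (d * exp (d*z))) - a * (a * exp (a*z))) := by ring
      _ < 0 := mul_neg_of_pos_of_neg (by linarith) h5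
  refine ⟨fun z hz => by rw [hderiv2]; exact hHneg z hz, ?_⟩
  -- Part 2
  have hGcont : Continuous G := by
    rw [hG_def]; fun_prop
  have hFcont : Continuous F := by
    rw [hF_def]; fun_prop
  have hG0 : G 0 = 0 := by simp [hG_def]
  have hGanti : StrictAntiOn G (Set.Icc (0:ℝ) 1.1) := by
    apply strictAntiOn_of_deriv_neg (convex_Icc _ _) hGcont.continuousOn
    intro z hz
    rw [interior_Icc] at hz
    rw [(hGz z).deriv]
    exact hHneg z ⟨le_of_lt hz.1, le_of_lt hz.2⟩
  have hGneg : ∀ z ∈ Set.Ioc (0:ℝ) 1.1, G z < 0 := by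
    intro z hz
    have := hGanti (Set.mem_Icc.2 ⟨le_refl 0, by norm_num⟩)
      (Set.mem_Icc.2 ⟨le_of_lt hz.1, hz.2⟩) hz.1
    rw [hG0] at this
    exact this
  have hψanti : StrictAntiOn ψ (Set.Icc (0:ℝ) 1.1) := by
    apply strictAntiOn_of_deriv_neg (convex_Icc _ _)
    · rw [hψF]; exact hFcont.continuousOn
    · intro z hz
      rw [interior_Icc] at hz
      rw [hderivψ]
      exact hGneg z ⟨hz.1, le_of_lt hz.2⟩
  have hψ0 : ψ 0 = 0 := by rw [hψF]; simp [hF_def]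
  intro z hz
  have := hψanti (Set.mem_Icc.2 ⟨le_refl 0, by norm_num⟩)
    (Set.mem_Icc.2 ⟨le_of_lt hz.1, hz.2⟩) hz.1
  rw [hψ0] at this
  exact this
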